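/- Every closed, connected, locally convex subset of ℝ^n is convex. -/

import Mathlib

open Metric Set List

namespace TietzeNakajimaAux

variable {E : Type*} [NormedAddCommGroup E] [InnerProductSpace ℝ E]

set_option linter.unusedSectionVars false

/-- Two points are linked in `C` if the segment between them lies in `C`. -/
def Linked (C : Set E) (a b : E) : Prop := segment ℝ a b ⊆ C

/-- Length of a polyline. -/
noncomputable def plen : List E → ℝ
  | [] => 0
  | [_] => 0
  | a :: b :: t => dist a b + plen (b :: t)

@[simp] lemma plen_nil : plen ([] : List E) = 0 := rfl
@[simp] lemma plen_single (a : E) : plen [a] = 0 := rfl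
@[simp] lemma plen_cons_cons (a b : E) (t : List E) :
    plen (a :: b :: t) = dist a b + plen (b :: t) := rfl

lemma plen_nonneg : ∀ l : List E, 0 ≤ plen l
  | [] => le_refl 0
  | [_] => le_refl 0
  | _ :: b :: t => add_nonneg dist_nonneg (plen_nonneg (b :: t))

lemma plen_cons (a : E) {l : List E} {b : E} (h : l.head? = some b) :
    plen (a :: l) = dist a b + plen l := by
  cases l with
  | nil => simp at h
  | cons c t =>
    simp only [head?_cons, Option.some.injEq] at h
    subst h; rfl

lemma dist_le_plen : ∀ (l : List E) {x y : E},
    l.head? = some x → l.getLast? = some y → dist x y ≤ plen l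
  | [], x, y => by simp
  | [a], x, y => by
      intro hx hy
      simp only [head?_cons, Option.some.injEq, getLast?_singleton] at hx hy
      subst hx; subst hy; simp
  | a :: b :: t, x, y => by
      intro hx hy
      simp only [head?_cons, Option.some.injEq] at hx
      subst hx
      rw [getLast?_cons_cons] at hy
      have h1 := dist_le_plen (b :: t) (x := b) (y := y) rfl hy
      have h2 := dist_triangle a b y
      have : plen (a :: b :: t) = dist a b + plen (b :: t) := rfl
      rw [this]; linarith

lemma plen_append : ∀ (l₁ l₂ : List E) {y b : E},
    l₁.getLast? = some y → l₂.head? = some b →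
    plen (l₁ ++ l₂) = plen l₁ + dist y b + plen l₂
  | [], _, y, b => by simp
  | [a], l₂, y, b => by
      intro hy hb
      simp only [getLast?_singleton, Option.some.injEq] at hy
      subst hy
      simp [plen_cons _ hb]
  | a :: c :: t, l₂, y, b => by
      intro hy hb
      rw [getLast?_cons_cons] at hy
      have ih := plen_append (c :: t) l₂ hy hb
      simp only [cons_append, plen_cons_cons] at ih ⊢
      rw [ih]; ring



variable {E : Type*} [NormedAddCommGroup E] [InnerProductSpace ℝ E]

set_option linter.unusedSectionVars false

/-- The set of lengths of polygonal chains in `C` from `x` to `y`. -/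
def lens (C : Set E) (x y : E) : Set ℝ :=
  {L | ∃ l : List E, l.Chain' (Linked C) ∧ l.head? = some x ∧ l.getLast? = some y ∧ plen l = L}

/-- Intrinsic (chain) distance. -/
noncomputable def rho (C : Set E) (x y : E) : ℝ := sInf (lens C x y)

lemma lens_nonneg {C : Set E} {x y : E} {L : ℝ} (h : L ∈ lens C x y) : 0 ≤ L := by
  obtain ⟨l, _, _, _, rfl⟩ := h; exact plen_nonneg l

lemma dist_le_of_mem_lens {C : Set E} {x y : E} {L : ℝ} (h : L ∈ lens C x y) :
    dist x y ≤ L := by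
  obtain ⟨l, _, h1, h2, rfl⟩ := h; exact dist_le_plen l h1 h2

lemma bddBelow_lens (C : Set E) (x y : E) : BddBelow (lens C x y) :=
  ⟨0, fun _ hL => lens_nonneg hL⟩

lemma rho_le_of_mem {C : Set E} {x y : E} {L : ℝ} (h : L ∈ lens C x y) :
    rho C x y ≤ L := csInf_le (bddBelow_lens C x y) h

lemma dist_le_rho {C : Set E} {x y : E} (h : (lens C x y).Nonempty) :
    dist x y ≤ rho C x y := le_csInf h fun _ hL => dist_le_of_mem_lens hL

lemma self_mem_lens (C : Set E) (x : E) : (0 : ℝ) ∈ lens C x x :=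
  ⟨[x], by simp [List.Chain'], by simp, by simp, rfl⟩

lemma seg_mem_lens {C : Set E} {x y : E} (h : Linked C x y) :
    dist x y ∈ lens C x y :=
  ⟨[x, y], by simp [List.Chain', List.isChain_cons_cons, h], by simp, by simp, by simp [plen]⟩

lemma rho_le_dist {C : Set E} {x y : E} (h : Linked C x y) :
    rho C x y ≤ dist x y := rho_le_of_mem (seg_mem_lens h)

lemma linked_self {C : Set E} {y : E} (hy : y ∈ C) : Linked C y y := by
  rw [Linked, segment_same]; exact singleton_subset_iff.2 hy

lemma lens_add {C : Set E} {x y z : E} (hy : y ∈ C) {L₁ L₂ : ℝ}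
    (h₁ : L₁ ∈ lens C x y) (h₂ : L₂ ∈ lens C y z) : L₁ + L₂ ∈ lens C x z := by
  obtain ⟨l₁, hc₁, hh₁, hl₁, rfl⟩ := h₁
  obtain ⟨l₂, hc₂, hh₂, hl₂, rfl⟩ := h₂
  have hne₁ : l₁ ≠ [] := by rintro rfl; simp at hh₁
  have hne₂ : l₂ ≠ [] := by rintro rfl; simp at hh₂
  refine ⟨l₁ ++ l₂, ?_, ?_, ?_, ?_⟩
  · show List.IsChain _ _
    rw [List.isChain_append]
    refine ⟨hc₁, hc₂, fun a ha b hb => ?_⟩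
    rw [hl₁, Option.mem_def, Option.some_inj] at ha
    rw [hh₂, Option.mem_def, Option.some_inj] at hb
    subst ha; subst hb
    exact linked_self hy
  · rwa [List.head?_append_of_ne_nil _ hne₁]
  · rwa [List.getLast?_append_of_ne_nil _ hne₂]
  · rw [plen_append l₁ l₂ hl₁ hh₂]; simp

lemma rho_triangle {C : Set E} {x y z : E} (hy : y ∈ C)
    (h₁ : (lens C x y).Nonempty) (h₂ : (lens C y z).Nonempty) :
    rho C x z ≤ rho C x y + rho C y z := by
  refine le_of_forall_pos_le_add fun ε hε => ?_
  obtain ⟨L₁, hL₁, hlt₁⟩ := Real.lt_sInf_add_pos h₁ (half_pos hε)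
  obtain ⟨L₂, hL₂, hlt₂⟩ := Real.lt_sInf_add_pos h₂ (half_pos hε)
  have h := rho_le_of_mem (lens_add hy hL₁ hL₂)
  have e1 : rho C x y = sInf (lens C x y) := rfl
  have e2 : rho C y z = sInf (lens C y z) := rfl
  rw [← e1] at hlt₁; rw [← e2] at hlt₂
  linarith


lemma exists_on_segment {a b : E} {c : ℝ} (h0 : 0 ≤ c) (hc : c ≤ dist a b) :
    ∃ z ∈ segment ℝ a b, dist a z = c ∧ dist z b = dist a b - c := by
  rcases eq_or_ne a b with rfl | hab
  · refine ⟨a, left_mem_segment _ _ _, ?_, ?_⟩ <;> simp at hc ⊢ <;> linarith [hc, h0]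
  · have hd : (0:ℝ) < dist a b := dist_pos.2 hab
    set r : ℝ := c / dist a b with hr
    have hr0 : 0 ≤ r := div_nonneg h0 hd.le
    have hr1 : r ≤ 1 := (div_le_one hd).2 hc
    refine ⟨AffineMap.lineMap a b r, ?_, ?_, ?_⟩
    · rw [segment_eq_image_lineMap]; exact ⟨r, ⟨hr0, hr1⟩, rfl⟩
    · rw [dist_comm, dist_lineMap_left, Real.norm_eq_abs, abs_of_nonneg hr0, hr,
        div_mul_cancel₀ _ hd.ne']
    · rw [dist_lineMap_right, Real.norm_eq_abs, abs_of_nonneg (by linarith : (0:ℝ) ≤ 1 - r), hr]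
      field_simp

lemma segment_subset_of_mem {a b z : E} (hz : z ∈ segment ℝ a b) :
    segment ℝ a z ⊆ segment ℝ a b :=
  (convex_segment a b).segment_subset (left_mem_segment _ _ _) hz

lemma segment_subset_of_mem' {a b z : E} (hz : z ∈ segment ℝ a b) :
    segment ℝ z b ⊆ segment ℝ a b :=
  (convex_segment a b).segment_subset hz (right_mem_segment _ _ _)

lemma lens_split {C : Set E} : ∀ (l : List E), l.Chain' (Linked C) → ∀ {x y : E},
    l.head? = some x → l.getLast? = some y → x ∈ C → ∀ {c : ℝ}, 0 ≤ c → c ≤ plen l →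
    ∃ z ∈ C, c ∈ lens C x z ∧ plen l - c ∈ lens C z y := by
  intro l
  induction l with
  | nil => intro _ x y hx; simp at hx
  | cons a t ih =>
    intro hch x y hx hy hxC c hc0 hcl
    rw [head?_cons, Option.some_inj] at hx
    subst hx
    cases t with
    | nil =>
      rw [getLast?_singleton, Option.some_inj] at hy
      subst hy
      have : plen [a] = 0 := rfl
      rw [this] at hcl ⊢
      obtain rfl : c = 0 := le_antisymm hcl hc0
      exact ⟨a, hxC, by simpa using self_mem_lens C a, by simpa using self_mem_lens C a⟩
    | cons b t =>
      unfold List.Chain' at hch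
      rw [List.isChain_cons_cons] at hch
      obtain ⟨hab, hch⟩ := hch
      rw [getLast?_cons_cons] at hy
      have hbC : b ∈ C := hab (right_mem_segment _ _ _)
      rcases le_or_gt c (dist a b) with hcase | hcase
      · obtain ⟨z, hzseg, hdaz, hdzb⟩ := exists_on_segment hc0 hcase
        have hzC : z ∈ C := hab hzseg
        refine ⟨z, hzC, ?_, ?_⟩
        · have : Linked C a z := fun w hw => hab (segment_subset_of_mem hzseg hw)
          have h := seg_mem_lens this
          rwa [hdaz] at h
        · have hlzb : Linked C z b := fun w hw => hab (segment_subset_of_mem' hzseg hw)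
          refine ⟨z :: b :: t, ?_, by simp, by rw [getLast?_cons_cons]; exact hy, ?_⟩
          · exact List.isChain_cons_cons.2 ⟨hlzb, hch⟩
          · rw [plen_cons_cons, hdzb, plen_cons_cons]
            ring
      · have hbt : (b :: t).head? = some b := rfl
        have h0' : (0:ℝ) ≤ c - dist a b := by linarith
        have h1' : c - dist a b ≤ plen (b :: t) := by
          rw [plen_cons_cons] at hcl; linarith
        obtain ⟨z, hzC, hm1, hm2⟩ := ih hch hbt hy hbC h0' h1'
        refine ⟨z, hzC, ?_, ?_⟩
        · have hmm := lens_add hbC (seg_mem_lens hab) hm1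
          have : dist a b + (c - dist a b) = c := by ring
          rwa [this] at hmm
        · have : plen (a :: b :: t) - c = plen (b :: t) - (c - dist a b) := by
            rw [plen_cons_cons]; ring
          rwa [this]


lemma linked_of_ball {C : Set E} {p : E} {d : ℝ} (hconv : Convex ℝ (C ∩ ball p d))
    {a b : E} (ha : a ∈ C ∩ ball p d) (hb : b ∈ C ∩ ball p d) : Linked C a b :=
  fun w hw => (hconv.segment_subset ha hb hw).1

lemma lens_nonempty {C : Set E} (hconn : IsPreconnected C)
    (d : E → ℝ) (hd : ∀ p ∈ C, 0 < d p ∧ Convex ℝ (C ∩ ball p (d p)))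
    {x : E} (hx : x ∈ C) : ∀ y ∈ C, (lens C x y).Nonempty := by
  set A : Set E := {y | y ∈ C ∧ (lens C x y).Nonempty} with hA
  set U : Set E := ⋃ y ∈ A, ball y (d y) with hU
  set V : Set E := ⋃ y ∈ C \ A, ball y (d y) with hV
  have hUopen : IsOpen U := isOpen_biUnion fun _ _ => isOpen_ball
  have hVopen : IsOpen V := isOpen_biUnion fun _ _ => isOpen_ball
  have hxA : x ∈ A := ⟨hx, ⟨0, self_mem_lens C x⟩⟩
  have hcover : C ⊆ U ∪ V := by
    intro y hy
    by_cases hyA : y ∈ A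
    · exact Or.inl (mem_biUnion hyA (mem_ball_self (hd y hy).1))
    · exact Or.inr (mem_biUnion ⟨hy, hyA⟩ (mem_ball_self (hd y hy).1))
  have hdisj : ¬ (C ∩ (U ∩ V)).Nonempty := by
    rintro ⟨w, hwC, hwU, hwV⟩
    obtain ⟨y, hyA, hwy⟩ := mem_iUnion₂.1 hwU
    obtain ⟨y', hy', hwy'⟩ := mem_iUnion₂.1 hwV
    have hyC : y ∈ C := hyA.1
    have hwA : (lens C x w).Nonempty := by
      obtain ⟨L, hL⟩ := hyA.2
      have hlink : Linked C y w :=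
        linked_of_ball (hd y hyC).2 ⟨hyC, mem_ball_self (hd y hyC).1⟩ ⟨hwC, hwy⟩
      exact ⟨L + dist y w, lens_add hyC hL (seg_mem_lens hlink)⟩
    have hy'C : y' ∈ C := hy'.1
    have hlink' : Linked C w y' :=
      linked_of_ball (hd y' hy'C).2 ⟨hwC, hwy'⟩ ⟨hy'C, mem_ball_self (hd y' hy'C).1⟩
    obtain ⟨L, hL⟩ := hwA
    exact hy'.2 ⟨hy'C, ⟨L + dist w y', lens_add hwC hL (seg_mem_lens hlink')⟩⟩
  intro y hy
  by_contra hyne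
  have hCU : (C ∩ U).Nonempty := ⟨x, hx, mem_biUnion hxA (mem_ball_self (hd x hx).1)⟩
  have hCV : (C ∩ V).Nonempty :=
    ⟨y, hy, mem_biUnion ⟨hy, fun h => hyne h.2⟩ (mem_ball_self (hd y hy).1)⟩
  exact hdisj (hconn U V hUopen hVopen hcover hCU hCV)

lemma uniform_delta {C K : Set E} (hK : IsCompact K) (hKC : K ⊆ C)
    (d : E → ℝ) (hd : ∀ p ∈ C, 0 < d p ∧ Convex ℝ (C ∩ ball p (d p))) :
    ∃ ε > 0, ∀ z ∈ K, Convex ℝ (C ∩ ball z ε) := by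
  have hcov : K ⊆ ⋃ p : K, ball (p : E) (d p) := by
    intro z hz
    exact mem_iUnion.2 ⟨⟨z, hz⟩, mem_ball_self (hd z (hKC hz)).1⟩
  obtain ⟨ε, hε0, hball⟩ :=
    lebesgue_number_lemma_of_metric hK (fun _ => isOpen_ball) hcov
  refine ⟨ε, hε0, fun z hz => ?_⟩
  obtain ⟨p, hp⟩ := hball z hz
  have heq : C ∩ ball z ε = (C ∩ ball (p : E) (d p)) ∩ ball z ε := by
    ext w
    constructor
    · rintro ⟨hwC, hwz⟩; exact ⟨⟨hwC, hp hwz⟩, hwz⟩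
    · rintro ⟨⟨hwC, _⟩, hwz⟩; exact ⟨hwC, hwz⟩
  rw [heq]
  exact ((hd p (hKC p.2)).2).inter (convex_ball z ε)


lemma exists_rho_midpoint {C : Set E} [ProperSpace E] (hclosed : IsClosed C)
    (d : E → ℝ) (hd : ∀ p ∈ C, 0 < d p ∧ Convex ℝ (C ∩ ball p (d p)))
    (hne : ∀ a ∈ C, ∀ b ∈ C, (lens C a b).Nonempty)
    {u v : E} (hu : u ∈ C) (hv : v ∈ C) :
    ∃ z ∈ C, rho C u z = rho C u v / 2 ∧ rho C z v = rho C u v / 2 := by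
  set R : ℝ := rho C u v with hR
  -- approximate midpoints
  have hzk : ∀ k : ℕ, ∃ z, z ∈ C ∧ rho C u z ≤ (R + 1/(k+1))/2 ∧
      rho C z v ≤ (R + 1/(k+1))/2 ∧ dist u z ≤ (R + 1)/2 := by
    intro k
    have hkpos : (0:ℝ) < 1/(k+1) := by positivity
    obtain ⟨L, hL, hLlt⟩ := Real.lt_sInf_add_pos (hne u hu v hv) hkpos
    have hL0 : 0 ≤ L := lens_nonneg hL
    obtain ⟨l, hch, hhd, hlast, hplen⟩ := hL
    obtain ⟨z, hzC, hm1, hm2⟩ := lens_split l hch hhd hlast hu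
      (by linarith : (0:ℝ) ≤ L/2) (by rw [hplen]; linarith)
    rw [hplen] at hm2
    have h1 : rho C u z ≤ L/2 := rho_le_of_mem hm1
    have h2 : rho C z v ≤ L - L/2 := rho_le_of_mem hm2
    have hduz : dist u z ≤ L/2 := dist_le_of_mem_lens hm1
    have hRL : sInf (lens C u v) = R := rfl
    rw [hRL] at hLlt
    have hk1 : 1/((k:ℝ)+1) ≤ 1 := by
      rw [div_le_one (by positivity)]; linarith [Nat.cast_nonneg (α := ℝ) k]
    refine ⟨z, hzC, by linarith, by linarith, by linarith⟩
  choose z hzC hz1 hz2 hz3 using hzk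
  have hbd : ∀ k, z k ∈ closedBall u ((R+1)/2) := fun k => by
    rw [mem_closedBall, dist_comm]; exact hz3 k
  obtain ⟨w, _, φ, hφ, hlim⟩ :=
    tendsto_subseq_of_bounded isBounded_closedBall hbd
  have hwC : w ∈ C := hclosed.mem_of_tendsto hlim
    (Filter.Eventually.of_forall fun k => hzC _)
  obtain ⟨hdw0, hdwconv⟩ := hd w hwC
  -- rho C u w ≤ R / 2
  have key : ∀ ε : ℝ, 0 < ε → rho C u w ≤ R/2 + ε ∧ rho C w v ≤ R/2 + ε := by
    intro ε hε
    have h1 : ∀ᶠ k in Filter.atTop, dist (z (φ k)) w < min (d w) (ε/2) := by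
      have := Metric.tendsto_atTop.1 hlim (min (d w) (ε/2)) (lt_min hdw0 (half_pos hε))
      simpa [Function.comp] using this
    have h2 : ∀ᶠ k in Filter.atTop, 1/((φ k : ℝ)+1) < ε := by
      have : ∀ᶠ k : ℕ in Filter.atTop, 1/((k:ℝ)+1) < ε := by
        have := tendsto_one_div_add_atTop_nhds_zero_nat (𝕜 := ℝ)
        exact this.eventually_lt_const hε
      filter_upwards [this] with k hk
      have hmono : (k:ℝ) + 1 ≤ (φ k : ℝ) + 1 := by
        exact add_le_add_left (Nat.cast_le.2 hφ.le_apply) 1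
      have : 1/((φ k : ℝ)+1) ≤ 1/((k:ℝ)+1) :=
        one_div_le_one_div_of_le (by positivity) hmono
      linarith
    obtain ⟨k, hk1, hk2⟩ := (h1.and h2).exists
    set p := z (φ k) with hp
    have hpC : p ∈ C := hzC _
    have hlinkpw : Linked C p w :=
      linked_of_ball hdwconv ⟨hpC, by rw [mem_ball]; exact lt_of_lt_of_le hk1 (min_le_left _ _)⟩
        ⟨hwC, mem_ball_self hdw0⟩
    have hlinkwp : Linked C w p :=
      linked_of_ball hdwconv ⟨hwC, mem_ball_self hdw0⟩
        ⟨hpC, by rw [mem_ball]; exact lt_of_lt_of_le hk1 (min_le_left _ _)⟩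
    have hdpw : dist p w < ε/2 := lt_of_lt_of_le hk1 (min_le_right _ _)
    constructor
    · calc rho C u w ≤ rho C u p + rho C p w :=
            rho_triangle hpC (hne u hu p hpC) (hne p hpC w hwC)
        _ ≤ (R + 1/((φ k : ℝ)+1))/2 + dist p w := by
            have ha := rho_le_dist hlinkpw
            have hb := hz1 (φ k)
            rw [← hp] at hb
            linarith
        _ ≤ R/2 + ε := by linarith
    · calc rho C w v ≤ rho C w p + rho C p v :=
            rho_triangle hpC (hne w hwC p hpC) (hne p hpC v hv)
        _ ≤ dist w p + (R + 1/((φ k : ℝ)+1))/2 := by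
            have ha := rho_le_dist hlinkwp
            have hb := hz2 (φ k)
            rw [← hp] at hb
            linarith
        _ ≤ R/2 + ε := by rw [dist_comm]; linarith
  have h1 : rho C u w ≤ R/2 := le_of_forall_pos_le_add fun ε hε => (key ε hε).1
  have h2 : rho C w v ≤ R/2 := le_of_forall_pos_le_add fun ε hε => (key ε hε).2
  have h3 : R ≤ rho C u w + rho C w v := rho_triangle hwC (hne u hu w hwC) (hne w hwC v hv)
  exact ⟨w, hwC, by linarith, by linarith⟩


lemma segment_subset_union {u v z : E} (hz : z ∈ segment ℝ u v) :
    segment ℝ u v ⊆ segment ℝ u z ∪ segment ℝ z v := by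
  intro w hw
  rw [mem_segment_iff_wbtw] at hz hw
  obtain ⟨s, hs, hzz⟩ := hz
  obtain ⟨t, ht, hww⟩ := hw
  have hdich := wbtw_or_wbtw_smul_vadd_of_nonneg u (v -ᵥ u) ht.1 hs.1
  have hz' : s • (v -ᵥ u) +ᵥ u = z := by
    rw [← hzz, AffineMap.lineMap_apply]
  have hw' : t • (v -ᵥ u) +ᵥ u = w := by
    rw [← hww, AffineMap.lineMap_apply]
  rw [hz', hw'] at hdich
  rcases hdich with h | h
  · exact Or.inl (mem_segment_iff_wbtw.2 h)
  · have hwv : Wbtw ℝ u w v := ⟨t, ht, hww⟩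
    exact Or.inr (mem_segment_iff_wbtw.2 (hwv.trans_left_right h))


theorem main {F : Type*} [NormedAddCommGroup F] [InnerProductSpace ℝ F]
    [FiniteDimensional ℝ F] {C : Set F}
    (hclosed : IsClosed C) (hconn : IsConnected C)
    (hloc : ∀ x ∈ C, ∃ U : Set F, IsOpen U ∧ x ∈ U ∧ Convex ℝ (C ∩ U)) :
    Convex ℝ C := by
  classical
  -- local convexity with balls
  have hball : ∀ p ∈ C, ∃ r > 0, Convex ℝ (C ∩ ball p r) := by
    intro p hp
    obtain ⟨U, hUopen, hpU, hUconv⟩ := hloc p hp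
    obtain ⟨r, hr0, hrU⟩ := Metric.isOpen_iff.1 hUopen p hpU
    refine ⟨r, hr0, ?_⟩
    have he : (C ∩ U) ∩ ball p r = C ∩ ball p r := by
      rw [inter_assoc, inter_eq_self_of_subset_right hrU]
    exact he ▸ (hUconv.inter (convex_ball p r))
  choose! d hd0 hdconv using hball
  have hd : ∀ p ∈ C, 0 < d p ∧ Convex ℝ (C ∩ ball p (d p)) :=
    fun p hp => ⟨hd0 p hp, hdconv p hp⟩
  have hne : ∀ a ∈ C, ∀ b ∈ C, (lens C a b).Nonempty :=
    fun a ha => lens_nonempty hconn.isPreconnected d hd ha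
  rw [convex_iff_segment_subset]
  by_contra hcon
  push_neg at hcon
  obtain ⟨x₀, hx₀, y₀, hy₀, hbad₀⟩ := hcon
  have hxyne : x₀ ≠ y₀ := by
    rintro rfl
    exact hbad₀ (by rw [segment_same]; exact singleton_subset_iff.2 hx₀)
  set R₀ : ℝ := rho C x₀ y₀ with hR₀
  have hR₀pos : 0 < R₀ :=
    lt_of_lt_of_le (dist_pos.2 hxyne) (dist_le_rho (hne x₀ hx₀ y₀ hy₀))
  -- uniform local convexity radius on a big compact piece
  set K : Set F := C ∩ closedBall x₀ (3 * R₀) with hK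
  have hKcomp : IsCompact K := (isCompact_closedBall x₀ _).inter_left hclosed
  obtain ⟨ε, hε0, hεconv⟩ := uniform_delta hKcomp inter_subset_left d hd
  -- the set of intrinsic distances of bad pairs
  set B : Set ℝ := {r | ∃ u v : F, u ∈ C ∧ v ∈ C ∧ dist u x₀ ≤ 3 * R₀ - 2 * r ∧
      dist v x₀ ≤ 3 * R₀ - 2 * r ∧ ¬ segment ℝ u v ⊆ C ∧ rho C u v = r} with hB
  have hR₀B : R₀ ∈ B := by
    refine ⟨x₀, y₀, hx₀, hy₀, ?_, ?_, hbad₀, rfl⟩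
    · rw [dist_self]; linarith
    · rw [dist_comm]
      have := dist_le_rho (hne x₀ hx₀ y₀ hy₀)
      linarith
  have hBlb : ∀ r ∈ B, ε ≤ r := by
    rintro r ⟨u, v, hu, hv, hud, hvd, hbad, hr⟩
    by_contra hlt
    push_neg at hlt
    have hr0 : 0 ≤ r := hr ▸ le_trans dist_nonneg (dist_le_rho (hne u hu v hv))
    have hduv : dist u v < ε := by
      have := dist_le_rho (hne u hu v hv)
      rw [hr] at this; linarith
    have huK : u ∈ K := ⟨hu, by rw [mem_closedBall]; linarith⟩
    have hconv := hεconv u huK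
    exact hbad fun w hw => (hconv.segment_subset ⟨hu, mem_ball_self hε0⟩
      ⟨hv, by rwa [mem_ball, dist_comm]⟩ hw).1
  have hBne : B.Nonempty := ⟨R₀, hR₀B⟩
  set M : ℝ := sInf B with hM
  have hεM : ε ≤ M := le_csInf hBne hBlb
  have hM0 : 0 < M := lt_of_lt_of_le hε0 hεM
  -- a near-minimal bad pair
  obtain ⟨r, hrB, hrlt⟩ := Real.lt_sInf_add_pos hBne hε0
  rw [← hM] at hrlt
  have hMr : M ≤ r := csInf_le ⟨0, fun b hb => le_trans hε0.le (hBlb b hb)⟩ hrB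
  have hr2M : r < 2 * M := by linarith
  obtain ⟨u, v, hu, hv, hud, hvd, hbad, hruv⟩ := hrB
  have hr0 : 0 < r := lt_of_lt_of_le hM0 hMr
  -- midpoint
  obtain ⟨z, hz, hz1, hz2⟩ := exists_rho_midpoint hclosed d hd hne hu hv
  rw [hruv] at hz1 hz2
  -- both halves are good
  have hgood : ∀ a b : F, a ∈ C → b ∈ C → dist a x₀ ≤ 3 * R₀ - 2 * r + r / 2 →
      dist b x₀ ≤ 3 * R₀ - 2 * r + r / 2 → rho C a b = r / 2 → segment ℝ a b ⊆ C := by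
    intro a b ha hb had hbd' hrab
    by_contra hbad'
    have : r / 2 ∈ B := by
      refine ⟨a, b, ha, hb, by linarith, by linarith, hbad', hrab⟩
    have hMle : M ≤ r / 2 :=
      csInf_le (⟨0, fun b hb => le_trans hε0.le (hBlb b hb)⟩ : BddBelow B) this
    linarith
  have hdzu : dist z u ≤ r / 2 := by
    rw [dist_comm]
    have := dist_le_rho (hne u hu z hz); rw [hz1] at this; exact this
  have hdzv' : dist z v ≤ r / 2 := by
    have := dist_le_rho (hne z hz v hv); rw [hz2] at this; exact this
  have hzx : dist z x₀ ≤ 3 * R₀ - 2 * r + r / 2 := by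
    have := dist_triangle z u x₀
    linarith
  have huz_seg : segment ℝ u z ⊆ C :=
    hgood u z hu hz (by linarith) hzx hz1
  have hzv_seg : segment ℝ z v ⊆ C :=
    hgood z v hz hv hzx (by linarith) hz2
  have hduz : dist u z = r / 2 := by
    have h1 := rho_le_dist huz_seg
    rw [hz1] at h1
    rw [dist_comm] at hdzu
    linarith
  have hdzv : dist z v = r / 2 := by
    have h1 := rho_le_dist hzv_seg
    rw [hz2] at h1
    linarith
  by_cases hW : Wbtw ℝ u z v
  · exact hbad fun w hw => (segment_subset_union hW.mem_segment hw).elim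
      (fun h => huz_seg h) (fun h => hzv_seg h)
  · have hzK : z ∈ K := ⟨hz, by rw [mem_closedBall]; linarith⟩
    have hconvz := hεconv z hzK
    set t : ℝ := ε / r with ht
    have ht0 : 0 < t := div_pos hε0 hr0
    have ht1 : t ≤ 1 := (div_le_one hr0).2 (hεM.trans hMr)
    set a : F := AffineMap.lineMap z u t with ha
    set b : F := AffineMap.lineMap z v t with hb
    have haseg : a ∈ segment ℝ z u := by
      rw [segment_eq_image_lineMap]; exact ⟨t, ⟨ht0.le, ht1⟩, rfl⟩
    have hbseg : b ∈ segment ℝ z v := by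
      rw [segment_eq_image_lineMap]; exact ⟨t, ⟨ht0.le, ht1⟩, rfl⟩
    have hauz : a ∈ segment ℝ u z := by rw [segment_symm]; exact haseg
    have haC : a ∈ C := huz_seg hauz
    have hbC : b ∈ C := hzv_seg hbseg
    have hdaz : dist a z = ε / 2 := by
      rw [ha, dist_lineMap_left, Real.norm_eq_abs, abs_of_nonneg ht0.le, dist_comm z u, hduz, ht]
      field_simp
    have hdbz : dist b z = ε / 2 := by
      rw [hb, dist_lineMap_left, Real.norm_eq_abs, abs_of_nonneg ht0.le, hdzv, ht]
      field_simp
    have hab_seg : segment ℝ a b ⊆ C := fun w hw =>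
      (hconvz.segment_subset ⟨haC, by rw [mem_ball]; rw [hdaz]; linarith⟩
        ⟨hbC, by rw [mem_ball]; rw [hdbz]; linarith⟩ hw).1
    have hnW : ¬ Wbtw ℝ a z b := by
      intro hW'
      apply hW
      have hmap := hW'.map (AffineMap.homothety z t⁻¹)
      have ha' : (AffineMap.homothety z t⁻¹) a = u := by
        simp only [ha, AffineMap.homothety_apply, AffineMap.lineMap_apply, vsub_eq_sub,
          vadd_eq_add, add_sub_cancel_right, smul_smul, inv_mul_cancel₀ ht0.ne', one_smul,
          sub_add_cancel]
      have hb' : (AffineMap.homothety z t⁻¹) b = v := by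
        simp only [hb, AffineMap.homothety_apply, AffineMap.lineMap_apply, vsub_eq_sub,
          vadd_eq_add, add_sub_cancel_right, smul_smul, inv_mul_cancel₀ ht0.ne', one_smul,
          sub_add_cancel]
      have hz' : (AffineMap.homothety z t⁻¹) z = z := by
        simp [AffineMap.homothety_apply]
      rwa [ha', hz', hb'] at hmap
    have hablt : dist a b < ε := by
      have htri : dist a b ≤ dist a z + dist z b := dist_triangle a z b
      rcases eq_or_lt_of_le htri with heq | hlt
      · exact absurd (dist_add_dist_eq_iff.1 heq.symm) hnW
      · rw [hdaz, dist_comm z b, hdbz] at hlt; linarith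
    have hdua : dist u a = r / 2 - ε / 2 := by
      have h := dist_add_dist_of_mem_segment hauz
      rw [hdaz, hduz] at h; linarith
    have hdbv : dist b v = r / 2 - ε / 2 := by
      have h := dist_add_dist_of_mem_segment hbseg
      rw [dist_comm z b, hdbz, hdzv] at h; linarith
    have m1 : Linked C u a := fun w hw => huz_seg (segment_subset_of_mem hauz hw)
    have m3 : Linked C b v := fun w hw => hzv_seg (segment_subset_of_mem' hbseg hw)
    have total : (dist u a + dist a b) + dist b v ∈ lens C u v :=
      lens_add hbC (lens_add haC (seg_mem_lens m1) (seg_mem_lens hab_seg))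
        (seg_mem_lens m3)
    have hfin : rho C u v ≤ (dist u a + dist a b) + dist b v := rho_le_of_mem total
    rw [hruv, hdua, hdbv] at hfin
    linarith
  
end TietzeNakajimaAux

/-- Tietze–Nakajima theorem: every closed, connected, locally convex subset of ℝ^n
is convex. -/
theorem closed_connected_locallyConvex_is_convex
    (n : ℕ) (C : Set (Fin n → ℝ))
    (hclosed : IsClosed C) (hconn : IsConnected C)
    (hloc : ∀ x ∈ C, ∃ U : Set (Fin n → ℝ), IsOpen U ∧ x ∈ U ∧ Convex ℝ (C ∩ U)) :
    Convex ℝ C := by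
  classical
  set e : EuclideanSpace ℝ (Fin n) ≃L[ℝ] (Fin n → ℝ) := EuclideanSpace.equiv (Fin n) ℝ with he
  set C' : Set (EuclideanSpace ℝ (Fin n)) := ⇑e ⁻¹' C with hC'
  have himg : C' = ⇑e.symm '' C := by
    rw [hC', ContinuousLinearEquiv.image_symm_eq_preimage]
  have hclosed' : IsClosed C' := hclosed.preimage e.continuous
  have hconn' : IsConnected C' := by
    rw [himg]
    exact hconn.image _ e.symm.continuous.continuousOn
  have hloc' : ∀ x ∈ C', ∃ U : Set (EuclideanSpace ℝ (Fin n)),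
      IsOpen U ∧ x ∈ U ∧ Convex ℝ (C' ∩ U) := by
    intro x hx
    obtain ⟨U, hUopen, hxU, hUconv⟩ := hloc (e x) hx
    refine ⟨⇑e ⁻¹' U, hUopen.preimage e.continuous, hxU, ?_⟩
    have : C' ∩ ⇑e ⁻¹' U = ⇑e ⁻¹' (C ∩ U) := by rw [Set.preimage_inter]
    rw [this]
    exact hUconv.linear_preimage (e : EuclideanSpace ℝ (Fin n) →ₗ[ℝ] (Fin n → ℝ))
  have hconv' : Convex ℝ C' :=
    TietzeNakajimaAux.main hclosed' hconn' hloc'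
  have : C = ⇑e '' C' := by
    rw [hC', Set.image_preimage_eq C e.surjective]
  rw [this]
  exact hconv'.linear_image (e : EuclideanSpace ℝ (Fin n) →ₗ[ℝ] (Fin n → ℝ))
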